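/- The function α(x,y) of Lemma 3 satisfies α(x,y) = α(x,−y) on its domain, and consequently G(x, α(x,0)) = 0 for all x near 1. -/

import Mathlib

/-- `ψ` is an analytic solution near `0` of the singular Cauchy problem
`3x ψ'' + 6x (ψ')³ − 4ψ (ψ')² − 3ψ' = 0`, `ψ(0) = 1`, `ψ'(0) = −3/4`. -/
def GavrilovODE (ψ : ℝ → ℝ) : Prop :=
  AnalyticAt ℝ ψ 0 ∧ ψ 0 = 1 ∧ deriv ψ 0 = -(3/4) ∧
    ∀ᶠ x in nhds (0:ℝ),
      3 * x * deriv (deriv ψ) x + 6 * x * (deriv ψ x)^3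
        - 4 * ψ x * (deriv ψ x)^2 - 3 * deriv ψ x = 0

/-- `α` is an analytic solution near `(1,0)` of the system
`∂α/∂x = F(x,α)`, `(∂α/∂y)² = G(x,α)` with `α(1,0) = 0` and `∂α/∂y` not
identically zero. -/
def SolvesSystem (F G : ℝ → ℝ → ℝ) (α : ℝ → ℝ → ℝ) : Prop :=
  AnalyticAt ℝ (fun q : ℝ × ℝ => α q.1 q.2) (1, 0) ∧
  α 1 0 = 0 ∧
  (¬ ∀ᶠ q : ℝ × ℝ in nhds (1, 0), deriv (α q.1) q.2 = 0) ∧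
  ∀ᶠ q : ℝ × ℝ in nhds (1, 0),
    deriv (fun x => α x q.2) q.1 = F q.1 (α q.1 q.2) ∧
    (deriv (α q.1) q.2)^2 = G q.1 (α q.1 q.2)



set_option maxHeartbeats 1000000

noncomputable def Gfun (ψ : ℝ → ℝ) (x a : ℝ) : ℝ :=
  12*x^2*a - (-2*x*ψ a + 2*x^3)^2 - 6*a*(1/deriv ψ a + 2*ψ a)

noncomputable def GdF (ψ : ℝ → ℝ) (x a : ℝ) : ℝ :=
  12*x^2 + 4*x*deriv ψ a*(-2*x*ψ a + 2*x^3)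
    - (6*(1/deriv ψ a + 2*ψ a) + 6*a*(-(deriv (deriv ψ) a)/(deriv ψ a)^2 + 2*deriv ψ a))

noncomputable def GxF (ψ : ℝ → ℝ) (x a : ℝ) : ℝ :=
  24*x*a - 2*(-2*x*ψ a + 2*x^3)*(-2*ψ a + 6*x^2)

lemma gav_alg (x a p p1 p2 : ℝ) (h1 : p1 ≠ 0)
    (hode : 3*a*p2 + 6*a*p1^3 - 4*p*p1^2 - 3*p1 = 0) :
    (24*x*a - 2*(-2*x*p + 2*x^3)*(-2*p + 6*x^2))
      + (12*x^2 + 4*x*p1*(-2*x*p + 2*x^3)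
          - (6*(1/p1 + 2*p) + 6*a*(-p2/p1^2 + 2*p1))) * (-2*x*p + 2*x^3)
    = (-4*x*p1) * (12*x^2*a - (-2*x*p + 2*x^3)^2 - 6*a*(1/p1 + 2*p)) := by
  field_simp
  linear_combination ((-4*x*(p - x^2))) * hode

lemma gav_alg' (ψ : ℝ → ℝ) (x a : ℝ) (h1 : deriv ψ a ≠ 0)
    (hode : 3*a*(deriv (deriv ψ) a) + 6*a*(deriv ψ a)^3 - 4*ψ a*(deriv ψ a)^2
      - 3*deriv ψ a = 0) :
    GxF ψ x a + GdF ψ x a * (-2*x*ψ a + 2*x^3) = (-4*x*deriv ψ a) * Gfun ψ x a := by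
  unfold GxF GdF Gfun
  exact gav_alg x a (ψ a) (deriv ψ a) (deriv (deriv ψ) a) h1 hode

lemma hasDerivAt_Gfun_snd (ψ : ℝ → ℝ) (x a : ℝ)
    (hψ : HasDerivAt ψ (deriv ψ a) a)
    (hψ1 : HasDerivAt (deriv ψ) (deriv (deriv ψ) a) a)
    (hne : deriv ψ a ≠ 0) :
    HasDerivAt (fun b => Gfun ψ x b) (GdF ψ x a) a := by
  have h1 : HasDerivAt (fun b : ℝ => 12*x^2*b) (12*x^2) a := by
    simpa using (hasDerivAt_id a).const_mul (12*x^2)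
  have h2 : HasDerivAt (fun b => -2*x*ψ b + 2*x^3) (-2*x*deriv ψ a) a := by
    simpa using (hψ.const_mul (-2*x)).add_const (2*x^3)
  have h2sq : HasDerivAt (fun b => (-2*x*ψ b + 2*x^3)^2)
      (2*(-2*x*ψ a + 2*x^3)^1*(-2*x*deriv ψ a)) a := h2.pow 2
  have h3 : HasDerivAt (fun b => 1/deriv ψ b)
      (-(deriv (deriv ψ) a)/(deriv ψ a)^2) a := by
    have := hψ1.inv hne
    simp only [one_div]
    exact this
  have h4 : HasDerivAt (fun b => 1/deriv ψ b + 2*ψ b)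
      (-(deriv (deriv ψ) a)/(deriv ψ a)^2 + 2*deriv ψ a) a := by
    exact h3.add (hψ.const_mul 2)
  have h5 : HasDerivAt (fun b : ℝ => 6*b) (6:ℝ) a := by
    simpa using (hasDerivAt_id a).const_mul (6:ℝ)
  have h6 : HasDerivAt (fun b => 6*b*(1/deriv ψ b + 2*ψ b))
      (6*(1/deriv ψ a + 2*ψ a) + 6*a*(-(deriv (deriv ψ) a)/(deriv ψ a)^2 + 2*deriv ψ a)) a := by
    have := h5.mul h4
    exact this.congr_deriv (by ring)
  have := (h1.sub h2sq).sub h6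
  refine this.congr_deriv ?_
  unfold GdF
  ring

lemma hasDerivAt_Gfun_comp (ψ : ℝ → ℝ) (x : ℝ) (u : ℝ → ℝ) (u' : ℝ)
    (hu : HasDerivAt u u' x)
    (hψ : HasDerivAt ψ (deriv ψ (u x)) (u x))
    (hψ1 : HasDerivAt (deriv ψ) (deriv (deriv ψ) (u x)) (u x))
    (hne : deriv ψ (u x) ≠ 0) :
    HasDerivAt (fun t => Gfun ψ t (u t)) (GxF ψ x (u x) + GdF ψ x (u x) * u') x := by
  set a := u x with ha
  have hψu : HasDerivAt (fun t => ψ (u t)) (deriv ψ a * u') x := (hψ.comp x hu)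
  have hψ1u : HasDerivAt (fun t => deriv ψ (u t)) (deriv (deriv ψ) a * u') x := (hψ1.comp x hu)
  have h1 : HasDerivAt (fun t : ℝ => 12*t^2*(u t)) (24*x*a + 12*x^2*u') x := by
    have := ((hasDerivAt_pow 2 x).const_mul (12:ℝ)).mul hu
    exact this.congr_deriv (by ring)
  have h2 : HasDerivAt (fun t => -2*t*ψ (u t) + 2*t^3)
      ((-2*ψ a + -2*x*(deriv ψ a * u')) + 2*(3*x^2)) x := by
    have ha' : HasDerivAt (fun t : ℝ => -2*t) (-2 : ℝ) x := by
      simpa using (hasDerivAt_id x).const_mul (-2:ℝ)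
    have hm : HasDerivAt (fun t => -2*t*ψ (u t)) (-2*ψ a + -2*x*(deriv ψ a * u')) x := by
      have := ha'.mul hψu
      exact this.congr_deriv (by ring)
    exact (hm.add ((hasDerivAt_pow 3 x).const_mul (2:ℝ))).congr_deriv (by norm_num)
  have h2sq : HasDerivAt (fun t => (-2*t*ψ (u t) + 2*t^3)^2)
      (2*(-2*x*ψ a + 2*x^3)^1*((-2*ψ a + -2*x*(deriv ψ a * u')) + 2*(3*x^2))) x := h2.pow 2
  have h3 : HasDerivAt (fun t => 1/deriv ψ (u t))
      (-(deriv (deriv ψ) a * u')/(deriv ψ a)^2) x := by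
    have := hψ1u.inv hne
    simp only [one_div]
    exact this
  have h4 : HasDerivAt (fun t => 1/deriv ψ (u t) + 2*ψ (u t))
      (-(deriv (deriv ψ) a * u')/(deriv ψ a)^2 + 2*(deriv ψ a * u')) x := by
    exact h3.add (hψu.const_mul 2)
  have h6 : HasDerivAt (fun t => 6*(u t)*(1/deriv ψ (u t) + 2*ψ (u t)))
      (6*u'*(1/deriv ψ a + 2*ψ a)
        + 6*a*(-(deriv (deriv ψ) a * u')/(deriv ψ a)^2 + 2*(deriv ψ a * u'))) x := by
    have := (hu.const_mul (6:ℝ)).mul h4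
    exact this.congr_deriv (by ring)
  have := (h1.sub h2sq).sub h6
  refine this.congr_deriv ?_
  unfold GxF GdF
  field_simp
  ring

lemma gav_GdF_analytic (ψ : ℝ → ℝ) (x₀ a : ℝ)
    (h1 : AnalyticAt ℝ ψ a) (h2 : AnalyticAt ℝ (deriv ψ) a)
    (h3 : AnalyticAt ℝ (deriv (deriv ψ)) a) (hne : deriv ψ a ≠ 0) :
    AnalyticAt ℝ (fun q : ℝ × ℝ => GdF ψ q.1 q.2) (x₀, a) := by
  have hs : AnalyticAt ℝ (fun q : ℝ × ℝ => q.2) (x₀, a) := analyticAt_snd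
  have hf : AnalyticAt ℝ (fun q : ℝ × ℝ => q.1) (x₀, a) := analyticAt_fst
  have hψ : AnalyticAt ℝ (fun q : ℝ × ℝ => ψ q.2) (x₀, a) := h1.comp hs
  have hψ1 : AnalyticAt ℝ (fun q : ℝ × ℝ => deriv ψ q.2) (x₀, a) := AnalyticAt.comp (g := deriv ψ) h2 hs
  have hψ2 : AnalyticAt ℝ (fun q : ℝ × ℝ => deriv (deriv ψ) q.2) (x₀, a) := AnalyticAt.comp (g := deriv (deriv ψ)) h3 hs
  have hne' : deriv ψ ((x₀, a) : ℝ × ℝ).2 ≠ 0 := hne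
  unfold GdF
  apply AnalyticAt.sub
  · apply AnalyticAt.add
    · exact analyticAt_const.mul (hf.pow 2)
    · exact ((analyticAt_const.mul hf).mul hψ1).mul
        (((analyticAt_const.mul hf).mul hψ).add (analyticAt_const.mul (hf.pow 3)))
  · apply AnalyticAt.add
    · exact analyticAt_const.mul ((analyticAt_const.div hψ1 hne').add (analyticAt_const.mul hψ))
    · exact (analyticAt_const.mul hs).mul
        ((hψ2.neg.div (hψ1.pow 2) (pow_ne_zero 2 hne')).add (analyticAt_const.mul hψ1))

/-- Remark 2: `α(x,y) = α(x,−y)`, and consequently `G(x, α(x,0)) = 0` for `x` near `1`. -/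
theorem gavrilov_alpha_even (ψ : ℝ → ℝ) (h : GavrilovODE ψ)
    (F : ℝ → ℝ → ℝ) (hF : ∀ x α, F x α = -2*x*ψ α + 2*x^3)
    (H : ℝ → ℝ) (hH : ∀ α, H α = 6*α*(1/deriv ψ α + 2*ψ α))
    (G : ℝ → ℝ → ℝ) (hG : ∀ x α, G x α = 12*x^2*α - (F x α)^2 - H α)
    (α : ℝ → ℝ → ℝ) (hα : SolvesSystem F G α) :
    (∀ᶠ q : ℝ × ℝ in nhds (1, 0), α q.1 q.2 = α q.1 (-q.2)) ∧
    ∀ᶠ x in nhds (1:ℝ), G x (α x 0) = 0 := by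
  obtain ⟨hψa, hψ0, hψ'0, hodeE⟩ := h
  obtain ⟨hαa, hα0, -, hpde⟩ := hα
  have hGfun : ∀ x a, G x a = Gfun ψ x a := by
    intro x a; simp only [hG, hF, hH, Gfun]
  -- good set for ψ
  obtain ⟨ρ, hρpos, hgood⟩ : ∃ ρ > 0, ∀ a : ℝ, |a| ≤ ρ →
      (AnalyticAt ℝ ψ a ∧ AnalyticAt ℝ (deriv ψ) a ∧ AnalyticAt ℝ (deriv (deriv ψ)) a) ∧
      deriv ψ a ≠ 0 ∧
      3*a*(deriv (deriv ψ) a) + 6*a*(deriv ψ a)^3 - 4*ψ a*(deriv ψ a)^2 - 3*deriv ψ a = 0 := by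
    obtain ⟨s, hs, hsana⟩ := hψa.exists_mem_nhds_analyticOnNhd
    have h1 : ∀ᶠ a in nhds (0:ℝ), a ∈ s := hs
    have hψ10 : AnalyticAt ℝ (deriv ψ) 0 := hsana.deriv 0 (mem_of_mem_nhds hs)
    have h2 : ∀ᶠ a in nhds (0:ℝ), deriv ψ a ≠ 0 := by
      have : deriv ψ 0 ≠ 0 := by rw [hψ'0]; norm_num
      exact hψ10.continuousAt.eventually_ne this
    have hcomb := (h1.and (h2.and hodeE))
    rw [Metric.eventually_nhds_iff] at hcomb
    obtain ⟨ε, hε, hP⟩ := hcomb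
    refine ⟨ε/2, by linarith, fun a ha => ?_⟩
    have hda : dist a 0 < ε := by rw [Real.dist_eq, sub_zero]; linarith
    obtain ⟨hmem, hne, hode⟩ := hP hda
    exact ⟨⟨hsana a hmem, hsana.deriv a hmem, (hsana.deriv).deriv a hmem⟩, hne,
      by linarith [hode]⟩
  have hode_at : ∀ a : ℝ, |a| ≤ ρ →
      3*a*(deriv (deriv ψ) a) + 6*a*(deriv ψ a)^3 - 4*ψ a*(deriv ψ a)^2 - 3*deriv ψ a = 0 :=
    fun a ha => (hgood a ha).2.2
  have hψ_hd : ∀ a : ℝ, |a| ≤ ρ → HasDerivAt ψ (deriv ψ a) a :=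
    fun a ha => ((hgood a ha).1.1.differentiableAt).hasDerivAt
  have hψ1_hd : ∀ a : ℝ, |a| ≤ ρ → HasDerivAt (deriv ψ) (deriv (deriv ψ) a) a :=
    fun a ha => ((hgood a ha).1.2.1.differentiableAt).hasDerivAt
  have hψne : ∀ a : ℝ, |a| ≤ ρ → deriv ψ a ≠ 0 := fun a ha => (hgood a ha).2.1
  -- Lipschitz neighborhood for GdF as a two-variable function
  have hGdF2 : AnalyticAt ℝ (fun q : ℝ × ℝ => GdF ψ q.1 q.2) ((1:ℝ), (0:ℝ)) := by
    have h0 : |(0:ℝ)| ≤ ρ := by simp [le_of_lt hρpos]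
    exact gav_GdF_analytic ψ 1 0 (hgood 0 h0).1.1 (hgood 0 h0).1.2.1 (hgood 0 h0).1.2.2
      (hψne 0 h0)
  obtain ⟨K, tL, htL, hlipK⟩ :=
    (hGdF2.contDiffAt (n := 1)).exists_lipschitzOnWith
  -- the rectangle
  have e1 : ∀ᶠ q : ℝ × ℝ in nhds (1, 0), AnalyticAt ℝ (fun q : ℝ × ℝ => α q.1 q.2) q :=
    hαa.eventually_analyticAt
  have htend : Filter.Tendsto (fun q : ℝ × ℝ => α q.1 q.2) (nhds (1,0)) (nhds 0) := by
    have := hαa.continuousAt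
    rwa [ContinuousAt, hα0] at this
  have e3 : ∀ᶠ q : ℝ × ℝ in nhds (1, 0), |α q.1 q.2| ≤ ρ := by
    filter_upwards [htend (Metric.ball_mem_nhds 0 hρpos)] with q hq
    simp only [Set.mem_preimage, Metric.mem_ball, Real.dist_eq, sub_zero] at hq
    exact le_of_lt hq
  have e4 : ∀ᶠ q : ℝ × ℝ in nhds (1, 0), (q.1, α q.1 q.2) ∈ tL := by
    have hc : Filter.Tendsto (fun q : ℝ × ℝ => (q.1, α q.1 q.2)) (nhds (1,0))
        (nhds ((1:ℝ), (0:ℝ))) := by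
      have h1 : Filter.Tendsto (fun q : ℝ × ℝ => q.1) (nhds ((1:ℝ),(0:ℝ))) (nhds 1) :=
        continuousAt_fst
      exact h1.prodMk_nhds htend
    exact hc htL
  have hcomb2 := e1.and (hpde.and (e3.and e4))
  rw [Metric.eventually_nhds_iff] at hcomb2
  obtain ⟨ε₂, hε₂, hQ⟩ := hcomb2
  set r : ℝ := ε₂/2 with hr
  have hrpos : 0 < r := by positivity
  have hrect : ∀ x y : ℝ, |x - 1| ≤ r → |y| ≤ r →
      (AnalyticAt ℝ (fun q : ℝ × ℝ => α q.1 q.2) (x, y) ∧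
        (deriv (fun x' => α x' y) x = F x (α x y) ∧
          (deriv (α x) y)^2 = G x (α x y)) ∧
        |α x y| ≤ ρ ∧ (x, α x y) ∈ tL) := by
    intro x y hx hy
    have hd : dist ((x,y) : ℝ × ℝ) (1,0) < ε₂ := by
      rw [Prod.dist_eq]
      have h1 : dist x 1 < ε₂ := by rw [Real.dist_eq]; simp only [hr] at hx ⊢; linarith
      have h2 : dist y 0 < ε₂ := by rw [Real.dist_eq, sub_zero]; simp only [hr] at hy ⊢; linarith
      exact max_lt h1 h2
    exact hQ hd
  -- Part 2: w(x) = G(x, α(x,0)) satisfies a linear ODE with w(1) = 0, hence vanishes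
  set r2 : ℝ := r/2 with hr2
  have hr2pos : 0 < r2 := by positivity
  have hr2r : r2 ≤ r := by rw [hr2]; linarith
  have h0r : |(0:ℝ)| ≤ r := by simp [le_of_lt hrpos]
  have huana : ∀ t : ℝ, |t - 1| ≤ r → AnalyticAt ℝ (fun t' => α t' 0) t := by
    intro t ht
    have hmap : AnalyticAt ℝ (fun t' : ℝ => ((t', (0:ℝ)) : ℝ × ℝ)) t :=
      analyticAt_id.prod analyticAt_const
    exact AnalyticAt.comp (g := fun q : ℝ × ℝ => α q.1 q.2)
      (f := fun t' : ℝ => ((t', (0:ℝ)) : ℝ × ℝ)) (x := t) ((hrect t 0 ht h0r).1) hmap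
  have hu_hd : ∀ t : ℝ, |t-1| ≤ r →
      HasDerivAt (fun t' => α t' 0) (-2*t*ψ (α t 0) + 2*t^3) t := by
    intro t ht
    have hd := ((huana t ht).differentiableAt).hasDerivAt
    rw [(hrect t 0 ht h0r).2.1.1, hF] at hd
    exact hd
  have hw_hd : ∀ t : ℝ, |t-1| ≤ r →
      HasDerivAt (fun t' => Gfun ψ t' (α t' 0))
        ((-4*t*deriv ψ (α t 0)) * Gfun ψ t (α t 0)) t := by
    intro t ht
    have hmem : |α t 0| ≤ ρ := (hrect t 0 ht h0r).2.2.1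
    have h2 : HasDerivAt (fun t' => Gfun ψ t' (α t' 0))
        (GxF ψ t (α t 0) + GdF ψ t (α t 0) * (-2*t*ψ (α t 0) + 2*t^3)) t :=
      hasDerivAt_Gfun_comp ψ t (fun t' => α t' 0) _ (hu_hd t ht)
        (hψ_hd _ hmem) (hψ1_hd _ hmem) (hψne _ hmem)
    rwa [gav_alg' ψ t (α t 0) (hψne _ hmem) (hode_at _ hmem)] at h2
  have habs : ∀ t ∈ Set.Icc (1-r2) (1+r2), |t-1| ≤ r := by
    intro t ht
    rw [Set.mem_Icc] at ht
    rw [abs_le]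
    constructor <;> linarith [ht.1, ht.2]
  have hccont : ContinuousOn (fun t => -4*t*deriv ψ (α t 0)) (Set.Icc (1-r2) (1+r2)) := by
    intro t ht
    have ht' : |t-1| ≤ r := habs t ht
    have hmem : |α t 0| ≤ ρ := (hrect t 0 ht' h0r).2.2.1
    have h1 : ContinuousAt (fun t' => α t' 0) t := (huana t ht').continuousAt
    have h2 : ContinuousAt (deriv ψ) (α t 0) := (hgood _ hmem).1.2.1.continuousAt
    have h3 : ContinuousAt (fun t' => deriv ψ (α t' 0)) t :=
      ContinuousAt.comp (g := deriv ψ) (f := fun t' => α t' 0) (x := t) h2 h1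
    exact ((continuousAt_const.mul continuousAt_id).mul h3).continuousWithinAt
  obtain ⟨K₀, hK₀⟩ := (isCompact_Icc : IsCompact (Set.Icc (1-r2) (1+r2))).exists_bound_of_continuousOn hccont
  have h1Icc : (1:ℝ) ∈ Set.Icc (1-r2) (1+r2) := by
    rw [Set.mem_Icc]; constructor <;> linarith
  have hK₀0 : 0 ≤ K₀ := le_trans (norm_nonneg _) (hK₀ 1 h1Icc)
  set clamp : ℝ → ℝ := fun t => max (1-r2) (min (1+r2) t) with hclamp
  have hclampIcc : ∀ t, clamp t ∈ Set.Icc (1-r2) (1+r2) := fun t =>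
    ⟨le_max_left _ _, max_le (by linarith) (min_le_left _ _)⟩
  have hclampeq : ∀ t ∈ Set.Icc (1-r2) (1+r2), clamp t = t := by
    intro t ht
    rw [Set.mem_Icc] at ht
    rw [hclamp]
    simp only
    rw [min_eq_right ht.2, max_eq_right ht.1]
  set v : ℝ → ℝ → ℝ := fun t y => (-4*(clamp t)*deriv ψ (α (clamp t) 0)) * y with hvdef
  have hlipv : ∀ t, LipschitzWith K₀.toNNReal (v t) := by
    intro t
    apply LipschitzWith.of_dist_le_mul
    intro y z
    rw [Real.dist_eq, Real.dist_eq]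
    have hb := hK₀ (clamp t) (hclampIcc t)
    rw [Real.norm_eq_abs] at hb
    have he : v t y - v t z = (-4*(clamp t)*deriv ψ (α (clamp t) 0)) * (y - z) := by
      rw [hvdef]; ring
    rw [he, abs_mul, Real.coe_toNNReal _ hK₀0]
    exact mul_le_mul_of_nonneg_right hb (abs_nonneg _)
  have h1mem : (1:ℝ) ∈ Set.Ioo (1-r2) (1+r2) := by
    rw [Set.mem_Ioo]; constructor <;> linarith
  have hwcont : ContinuousOn (fun t => Gfun ψ t (α t 0)) (Set.Icc (1-r2) (1+r2)) :=
    fun t ht => ((hw_hd t (habs t ht)).continuousAt).continuousWithinAt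
  have hw1 : Gfun ψ 1 (α 1 0) = 0 := by
    rw [hα0]; unfold Gfun; rw [hψ0]; norm_num
  have hkey : Set.EqOn (fun t => Gfun ψ t (α t 0)) (fun _ => (0:ℝ))
      (Set.Icc (1-r2) (1+r2)) := by
    apply ODE_solution_unique_of_mem_Icc (v := v) (s := fun _ => Set.univ)
      (K := K₀.toNNReal) (fun t _ => (hlipv t).lipschitzOnWith) h1mem hwcont
      ?_ (fun _ _ => trivial) continuousOn_const ?_ (fun _ _ => trivial) ?_
    · intro t ht
      have ht' : t ∈ Set.Icc (1-r2) (1+r2) := Set.mem_Icc_of_Ioo ht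
      have : v t (Gfun ψ t (α t 0))
          = (-4*t*deriv ψ (α t 0)) * Gfun ψ t (α t 0) := by
        rw [hvdef]
        simp only
        rw [hclampeq t ht']
      rw [this]
      exact hw_hd t (habs t ht')
    · intro t ht
      have : v t 0 = 0 := by rw [hvdef]; simp
      rw [this]
      exact hasDerivAt_const t 0
    · exact hw1
  have part2 : ∀ᶠ x in nhds (1:ℝ), G x (α x 0) = 0 := by
    filter_upwards [Ioo_mem_nhds h1mem.1 h1mem.2] with x hx
    rw [hGfun]
    exact hkey (Set.mem_Icc_of_Ioo hx)
  refine ⟨?_, part2⟩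
  -- Part 1: evenness in y
  have hw0 : ∀ x : ℝ, |x-1| ≤ r2 → Gfun ψ x (α x 0) = 0 := by
    intro x hx
    apply hkey
    rw [Set.mem_Icc]; rw [abs_le] at hx; constructor <;> linarith [hx.1, hx.2]
  have hkey1 : ∀ x : ℝ, |x-1| ≤ r2 → ∀ y : ℝ, |y| ≤ r2 → α x y = α x (-y) := by
    intro x hx
    have hxr : |x-1| ≤ r := le_trans hx hr2r
    set I : Set ℝ := Set.Ioo (-r) r with hI
    have hIopen : IsOpen I := isOpen_Ioo
    have habsI : ∀ y ∈ I, |y| ≤ r := by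
      intro y hy
      obtain ⟨h1, h2⟩ := hy
      rw [abs_le]; exact ⟨le_of_lt h1, le_of_lt h2⟩
    have hganaOn : AnalyticOnNhd ℝ (α x) I := by
      intro y hy
      have hmap : AnalyticAt ℝ (fun y' : ℝ => ((x, y') : ℝ × ℝ)) y :=
        analyticAt_const.prod analyticAt_id
      exact AnalyticAt.comp (g := fun q : ℝ × ℝ => α q.1 q.2)
        (f := fun y' : ℝ => ((x, y') : ℝ × ℝ)) (x := y)
        ((hrect x y hxr (habsI y hy)).1) hmap
    have hIeq : ∀ y ∈ I, (deriv (α x) y)^2 = Gfun ψ x (α x y) := by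
      intro y hy
      rw [← hGfun]
      exact (hrect x y hxr (habsI y hy)).2.1.2
    have h0I : (0:ℝ) ∈ I := by constructor <;> simp [hrpos, neg_lt_zero]
    have hd0 : deriv (α x) 0 = 0 := by
      have h1 := hIeq 0 h0I
      rw [hw0 x hx] at h1
      exact pow_eq_zero_iff (two_ne_zero) |>.mp h1
    have hr2ltr : r2 < r := by rw [hr2]; linarith
    have hsubI : Set.Icc (0:ℝ) r2 ⊆ I := by
      intro y hy
      rw [Set.mem_Icc] at hy
      constructor <;> [linarith [hy.1]; linarith [hy.2]]
    have hnegI : ∀ y ∈ Set.Icc (0:ℝ) r2, -y ∈ I := by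
      intro y hy
      rw [Set.mem_Icc] at hy
      constructor <;> [linarith [hy.2]; linarith [hy.1]]
    suffices hhalf : ∀ y ∈ Set.Icc (0:ℝ) r2, α x y = α x (-y) by
      intro y hy
      rw [abs_le] at hy
      rcases le_or_gt 0 y with hsgn|hsgn
      · exact hhalf y ⟨hsgn, hy.2⟩
      · have := hhalf (-y) ⟨by linarith, by linarith [hy.1]⟩
        rw [neg_neg] at this
        exact this.symm
    by_cases hA : ∀ y ∈ I, deriv (α x) y = 0
    · -- constant case
      have hEqOn : Set.EqOn (α x) (fun y => α x (-y)) (Set.Icc 0 r2) := by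
        apply ODE_solution_unique (v := fun _ _ => (0:ℝ)) (K := 0)
          (fun t => LipschitzWith.of_dist_le_mul (fun a b => by simp))
        · exact fun y hy => ((hganaOn y (hsubI hy)).continuousAt).continuousWithinAt
        · intro t ht
          have := ((hganaOn t (hsubI (Set.mem_Icc_of_Ico ht))).differentiableAt).hasDerivAt
          rw [hA t (hsubI (Set.mem_Icc_of_Ico ht))] at this
          exact this.hasDerivWithinAt
        · intro y hy
          have hyI : -y ∈ I := hnegI y hy
          have hc : ContinuousAt (fun y' => α x (-y')) y := by
            have := (hganaOn (-y) hyI).continuousAt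
            exact ContinuousAt.comp (g := α x) (f := fun y' : ℝ => -y') (x := y) this
              (continuousAt_id.neg)
          exact hc.continuousWithinAt
        · intro t ht
          have htI : -t ∈ I := hnegI t (Set.mem_Icc_of_Ico ht)
          have hc1 : HasDerivAt (α x) 0 (-t) := by
            have := ((hganaOn (-t) htI).differentiableAt).hasDerivAt
            rwa [hA (-t) htI] at this
          have hc2 : HasDerivAt (fun y' => α x (-y')) (0 * (-1)) t :=
            HasDerivAt.comp t hc1 (hasDerivAt_neg t)
          rw [zero_mul] at hc2
          exact hc2.hasDerivWithinAt
        · rw [neg_zero]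
      exact fun y hy => hEqOn hy
    · push_neg at hA
      obtain ⟨y₀, hy₀I, hy₀ne⟩ := hA
      have hg'anaOn : AnalyticOnNhd ℝ (deriv (α x)) I := hganaOn.deriv
      have hg''anaOn : AnalyticOnNhd ℝ (deriv (deriv (α x))) I := hg'anaOn.deriv
      have hmemρ : ∀ y ∈ I, |α x y| ≤ ρ := fun y hy =>
        (hrect x y hxr (habsI y hy)).2.2.1
      have hmemtL : ∀ y ∈ I, ((x, α x y) : ℝ × ℝ) ∈ tL := fun y hy =>
        (hrect x y hxr (habsI y hy)).2.2.2
      have hkeyid : ∀ y ∈ I, 2*(deriv (α x) y)*(deriv (deriv (α x)) y)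
          = GdF ψ x (α x y) * deriv (α x) y := by
        intro y hy
        have hEq : (fun z => (deriv (α x) z)^2) =ᶠ[nhds y] (fun z => Gfun ψ x (α x z)) := by
          filter_upwards [hIopen.mem_nhds hy] with z hz
          exact hIeq z hz
        have dL : HasDerivAt (fun z => (deriv (α x) z)^2)
            (2*(deriv (α x) y)^1*(deriv (deriv (α x)) y)) y :=
          ((hg'anaOn y hy).differentiableAt.hasDerivAt).pow 2
        have dR : HasDerivAt (fun z => Gfun ψ x (α x z))
            (GdF ψ x (α x y) * deriv (α x) y) y := by
          have hsnd := hasDerivAt_Gfun_snd ψ x (α x y) (hψ_hd _ (hmemρ y hy))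
            (hψ1_hd _ (hmemρ y hy)) (hψne _ (hmemρ y hy))
          have hgd : HasDerivAt (α x) (deriv (α x) y) y :=
            (hganaOn y hy).differentiableAt.hasDerivAt
          exact HasDerivAt.comp y hsnd hgd
        have hde := hEq.deriv_eq
        rw [dL.deriv, dR.deriv] at hde
        rw [pow_one] at hde
        exact hde
      have hg''eq : ∀ y ∈ I, deriv (deriv (α x)) y = GdF ψ x (α x y)/2 := by
        intro y hy
        by_cases hz : deriv (α x) y = 0
        · rcases (hg'anaOn y hy).eventually_eq_zero_or_eventually_ne_zero with hcase|hcase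
          · exfalso
            have hzero : Set.EqOn (deriv (α x)) 0 I :=
              hg'anaOn.eqOn_zero_of_preconnected_of_eventuallyEq_zero isPreconnected_Ioo hy hcase
            exact hy₀ne (hzero hy₀I)
          · have hIy : ∀ᶠ z in nhdsWithin y {y}ᶜ, z ∈ I :=
              Filter.Eventually.filter_mono nhdsWithin_le_nhds (hIopen.eventually_mem hy)
            have heveq : ∀ᶠ z in nhdsWithin y {y}ᶜ,
                deriv (deriv (α x)) z = GdF ψ x (α x z)/2 := by
              filter_upwards [hcase, hIy] with z hz1 hz2
              have h2 := hkeyid z hz2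
              have hne2 : (2:ℝ)*deriv (α x) z ≠ 0 := mul_ne_zero two_ne_zero hz1
              apply mul_left_cancel₀ hne2
              linear_combination h2
            have hc1 : ContinuousAt (deriv (deriv (α x))) y := (hg''anaOn y hy).continuousAt
            have hc2 : ContinuousAt (fun z => GdF ψ x (α x z)/2) y := by
              have hGc : ContinuousAt (fun q : ℝ × ℝ => GdF ψ q.1 q.2) (x, α x y) :=
                (gav_GdF_analytic ψ x (α x y) (hgood _ (hmemρ y hy)).1.1
                  (hgood _ (hmemρ y hy)).1.2.1 (hgood _ (hmemρ y hy)).1.2.2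
                  (hψne _ (hmemρ y hy))).continuousAt
              have hm : ContinuousAt (fun z : ℝ => ((x, α x z) : ℝ × ℝ)) y :=
                continuousAt_const.prodMk ((hganaOn y hy).continuousAt)
              exact (ContinuousAt.comp (g := fun q : ℝ × ℝ => GdF ψ q.1 q.2)
                (f := fun z : ℝ => ((x, α x z) : ℝ × ℝ)) (x := y) hGc hm).div_const 2
            have l1 : Filter.Tendsto (deriv (deriv (α x))) (nhdsWithin y {y}ᶜ)
                (nhds (deriv (deriv (α x)) y)) := hc1.tendsto.mono_left nhdsWithin_le_nhds
            have l2 : Filter.Tendsto (fun z => GdF ψ x (α x z)/2) (nhdsWithin y {y}ᶜ)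
                (nhds (GdF ψ x (α x y)/2)) := hc2.tendsto.mono_left nhdsWithin_le_nhds
            have l1' : Filter.Tendsto (deriv (deriv (α x))) (nhdsWithin y {y}ᶜ)
                (nhds (GdF ψ x (α x y)/2)) := l2.congr' (heveq.mono fun z hz => hz.symm)
            exact tendsto_nhds_unique l1 l1'
        · have h2 := hkeyid y hy
          have hne2 : (2:ℝ)*deriv (α x) y ≠ 0 := mul_ne_zero two_ne_zero hz
          apply mul_left_cancel₀ hne2
          linear_combination h2
      have hg''_hd : ∀ y ∈ I, HasDerivAt (deriv (α x)) (GdF ψ x (α x y)/2) y := by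
        intro y hy
        have := (hg'anaOn y hy).differentiableAt.hasDerivAt
        rwa [hg''eq y hy] at this
      -- uniqueness for the second-order system
      set v2 : ℝ → ℝ × ℝ → ℝ × ℝ := fun _ p => (p.2, GdF ψ x p.1 / 2) with hv2
      set sset : ℝ → Set (ℝ × ℝ) := fun _ => {p : ℝ × ℝ | ((x, p.1) : ℝ × ℝ) ∈ tL} with hsset
      have hlipv2 : ∀ t, LipschitzOnWith (K+1) (v2 t) (sset t) := by
        intro t
        apply LipschitzOnWith.of_dist_le_mul
        intro p hp q hq
        have hd1 : dist (GdF ψ x p.1) (GdF ψ x q.1) ≤ (K:ℝ) * dist p.1 q.1 := by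
          have := hlipK.dist_le_mul (x, p.1) hp (x, q.1) hq
          rwa [Prod.dist_eq, dist_self, max_eq_right dist_nonneg] at this
        have hhalf : dist (GdF ψ x p.1/2) (GdF ψ x q.1/2)
            = dist (GdF ψ x p.1) (GdF ψ x q.1)/2 := by
          rw [Real.dist_eq, Real.dist_eq, ← sub_div, abs_div, abs_two]
        have hK1 : ((K+1 : NNReal) : ℝ) = (K:ℝ) + 1 := by push_cast; ring
        rw [Prod.dist_eq (x := v2 t p), Prod.dist_eq (x := p), hv2, hK1]
        simp only
        apply max_le
        · calc dist p.2 q.2 ≤ max (dist p.1 q.1) (dist p.2 q.2) := le_max_right _ _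
            _ ≤ ((K:ℝ)+1) * max (dist p.1 q.1) (dist p.2 q.2) := by
              nlinarith [le_max_left (dist p.1 q.1) (dist p.2 q.2),
                dist_nonneg (x := p.1) (y := q.1), dist_nonneg (x := p.2) (y := q.2),
                K.coe_nonneg, le_max_right (dist p.1 q.1) (dist p.2 q.2)]
        · rw [hhalf]
          have h1 : dist p.1 q.1 ≤ max (dist p.1 q.1) (dist p.2 q.2) := le_max_left _ _
          nlinarith [dist_nonneg (x := p.1) (y := q.1), K.coe_nonneg, hd1,
            dist_nonneg (x := p.2) (y := q.2)]
      have hEqOn : Set.EqOn (fun y => ((α x y, deriv (α x) y) : ℝ × ℝ))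
          (fun y => ((α x (-y), -deriv (α x) (-y)) : ℝ × ℝ)) (Set.Icc 0 r2) := by
        apply ODE_solution_unique_of_mem_Icc_right (v := v2) (s := sset) (K := K+1) (fun t _ => hlipv2 t)
        · intro y hy
          exact (((hganaOn y (hsubI hy)).continuousAt).prodMk
            ((hg'anaOn y (hsubI hy)).continuousAt)).continuousWithinAt
        · intro t ht
          have htI : t ∈ I := hsubI (Set.mem_Icc_of_Ico ht)
          have hp : HasDerivAt (fun y => ((α x y, deriv (α x) y) : ℝ × ℝ))
              ((deriv (α x) t, GdF ψ x (α x t)/2) : ℝ × ℝ) t :=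
            ((hganaOn t htI).differentiableAt.hasDerivAt).prodMk (hg''_hd t htI)
          exact hp.hasDerivWithinAt
        · intro t ht
          exact hmemtL t (hsubI (Set.mem_Icc_of_Ico ht))
        · intro y hy
          have hyI : -y ∈ I := hnegI y hy
          have hc1 : ContinuousAt (fun y' => α x (-y')) y :=
            ContinuousAt.comp (g := α x) (f := fun y' : ℝ => -y') (x := y)
              ((hganaOn (-y) hyI).continuousAt) (continuousAt_id.neg)
          have hc2 : ContinuousAt (fun y' => -deriv (α x) (-y')) y :=
            (ContinuousAt.comp (g := deriv (α x)) (f := fun y' : ℝ => -y') (x := y)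
              ((hg'anaOn (-y) hyI).continuousAt) (continuousAt_id.neg)).neg
          exact (hc1.prodMk hc2).continuousWithinAt
        · intro t ht
          have htI : -t ∈ I := hnegI t (Set.mem_Icc_of_Ico ht)
          have hc1 : HasDerivAt (fun y' => α x (-y')) (deriv (α x) (-t) * (-1)) t :=
            HasDerivAt.comp t ((hganaOn (-t) htI).differentiableAt.hasDerivAt) (hasDerivAt_neg t)
          have hc2 : HasDerivAt (fun y' => -deriv (α x) (-y'))
              (-(GdF ψ x (α x (-t))/2 * (-1))) t :=
            (HasDerivAt.comp t (hg''_hd (-t) htI) (hasDerivAt_neg t)).neg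
          have hc1' : HasDerivAt (fun y' => α x (-y')) (-deriv (α x) (-t)) t := by
            rwa [mul_neg_one] at hc1
          have hc2' : HasDerivAt (fun y' => -deriv (α x) (-y')) (GdF ψ x (α x (-t))/2) t := by
            rw [mul_neg_one, neg_neg] at hc2
            exact hc2
          exact (hc1'.prodMk hc2').hasDerivWithinAt
        · intro t ht
          exact hmemtL (-t) (hnegI t (Set.mem_Icc_of_Ico ht))
        · simp only [neg_zero, hd0]
      intro y hy
      have := hEqOn hy
      exact congrArg Prod.fst this
  have hnhds : Set.Ioo (1-r2) (1+r2) ×ˢ Set.Ioo (-r2) r2 ∈ nhds ((1:ℝ), (0:ℝ)) :=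
    prod_mem_nhds (Ioo_mem_nhds (by linarith) (by linarith))
      (Ioo_mem_nhds (by linarith) (by linarith))
  filter_upwards [hnhds] with q hq
  obtain ⟨hq1, hq2⟩ := hq
  apply hkey1 q.1 _ q.2 _
  · rw [Set.mem_Ioo] at hq1
    rw [abs_le]
    constructor <;> linarith [hq1.1, hq1.2]
  · rw [Set.mem_Ioo] at hq2
    rw [abs_le]
    constructor <;> linarith [hq2.1, hq2.2]
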